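/- arXiv:1706.03591 — 2 statements merged into one kernel-verified Lean document; each statement's English description precedes it below -/
import Mathlib

section
/- Let n ≥ k and d ≥ k, and let R' = Φᵀ R ∈ ℝ^{k×d} have a singular value decomposition R' = Q_L Σ Q_Rᵀ, where Q_L ∈ ℝ^{k×k} and Q_R ∈ ℝ^{d×d} are orthogonal and Σ ∈ ℝ^{k×d} is the rectangular diagonal matrix whose diagonal entries are the singular values σ₁,…,σ_k of R'. Then there exists an orthogonal matrix Q ∈ ℝ^{d×d} such that ‖Ψ − Φ I_{k×d} Q‖_F = ‖Σ − I_{k×d}‖_F, i.e. ‖Ψ − Φ I_{k×d} Q‖_F² = Σ_{i=1}^{k} (σ_i − 1)². -/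
open Matrix MeasureTheory ProbabilityTheory Finset

noncomputable section

/-- The `a × b` matrix with ones on the main diagonal and zeros elsewhere. -/
def rectId (a b : ℕ) : Matrix (Fin a) (Fin b) ℝ :=
  Matrix.of fun i j => if (i : ℕ) = (j : ℕ) then 1 else 0

/-- Frobenius norm of a real matrix. -/
def frob {a b : ℕ} (M : Matrix (Fin a) (Fin b) ℝ) : ℝ :=
  Real.sqrt (∑ i, ∑ j, (M i j) ^ 2)

/-- Euclidean norm of a vector. -/
def enorm2 {a : ℕ} (v : Fin a → ℝ) : ℝ :=
  Real.sqrt (∑ i, (v i) ^ 2)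

/-- `X` is the cluster-indicator matrix of the partition of `Fin n` into the
(nonempty) fibers of the surjective map `f : Fin n → Fin k`. -/
def IsIndicatorOf {n k : ℕ} (f : Fin n → Fin k) (X : Matrix (Fin n) (Fin k) ℝ) : Prop :=
  Function.Surjective f ∧
    ∀ i j, X i j =
      if f i = j then 1 / Real.sqrt ((Finset.univ.filter fun i' => f i' = j).card) else 0

/-- `X` is a cluster-indicator matrix of a partition into `k` nonempty clusters. -/
def IsIndicator {n k : ℕ} (X : Matrix (Fin n) (Fin k) ℝ) : Prop :=
  ∃ f : Fin n → Fin k, IsIndicatorOf f X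

/-- The k-means cost of the assignment `X` on the feature matrix `M`. -/
def kmeansCost {n k m : ℕ} (M : Matrix (Fin n) (Fin m) ℝ)
    (X : Matrix (Fin n) (Fin k) ℝ) : ℝ :=
  frob (M - X * Xᵀ * M)

/-- `X` minimizes the k-means cost on features `M` over all indicator matrices. -/
def IsOptAssign {n k m : ℕ} (M : Matrix (Fin n) (Fin m) ℝ)
    (X : Matrix (Fin n) (Fin k) ℝ) : Prop :=
  IsIndicator X ∧
    ∀ Y : Matrix (Fin n) (Fin k) ℝ, IsIndicator Y → kmeansCost M X ≤ kmeansCost M Y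

/-- Law of an `n × d` random matrix with i.i.d. Gaussian entries of
mean `0` and variance `1 / d`. -/
def gaussMeasure (n d : ℕ) : Measure (Fin n → Fin d → ℝ) :=
  Measure.pi fun _ => Measure.pi fun _ => gaussianReal 0 (d : NNReal)⁻¹

lemma rectId_transpose (a b : ℕ) : (rectId a b)ᵀ = rectId b a := by
  ext i j; simp [rectId, transpose_apply, eq_comm]

lemma rectId_mul_rectId {a b : ℕ} (h : a ≤ b) :
    rectId a b * rectId b a = (1 : Matrix (Fin a) (Fin a) ℝ) := by
  ext i j
  rw [mul_apply, Finset.sum_eq_single (Fin.castLE h i)]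
  · simp [rectId, one_apply, Fin.ext_iff]
  · intro l _ hl
    have : ¬ (i : ℕ) = (l : ℕ) := fun hc => hl (Fin.ext (by simp [← hc]))
    simp [rectId, this]
  · simp

lemma rectId_eq {a b : ℕ} (h : a ≤ b) :
    rectId a b = (fromCols (1 : Matrix (Fin a) (Fin a) ℝ)
      (0 : Matrix (Fin a) (Fin (b - a)) ℝ)).submatrix id
      ⇑(finSumFinEquiv.trans (finCongr (Nat.add_sub_cancel' h))).symm := by
  ext i j
  set E := finSumFinEquiv.trans (finCongr (Nat.add_sub_cancel' h))
  rcases hs : E.symm j with x | x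
  · have hj : (j : ℕ) = (x : ℕ) := by
      have : j = E (Sum.inl x) := by rw [← hs, Equiv.apply_symm_apply]
      simp [this, E, finSumFinEquiv_apply_left]
    simp [rectId, submatrix_apply, hs, fromCols, one_apply, hj, Fin.ext_iff]
  · have hj : (j : ℕ) = a + (x : ℕ) := by
      have : j = E (Sum.inr x) := by rw [← hs, Equiv.apply_symm_apply]
      simp [this, E, finSumFinEquiv_apply_right]
    have hij : ¬ (i : ℕ) = (j : ℕ) := by omega
    simp [rectId, submatrix_apply, hs, fromCols, hij]

lemma sum_sq_eq_trace {p q : ℕ} (N : Matrix (Fin p) (Fin q) ℝ) :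
    ∑ i, ∑ j, (N i j) ^ 2 = (Nᵀ * N).trace := by
  rw [Finset.sum_comm]
  simp [Matrix.trace, Matrix.diag, mul_apply, sq]

lemma frob_conj {a b c : ℕ} (A : Matrix (Fin a) (Fin b) ℝ) (M : Matrix (Fin b) (Fin c) ℝ)
    (B : Matrix (Fin c) (Fin c) ℝ) (hA : Aᵀ * A = 1) (hB : Bᵀ * B = 1) :
    frob (A * M * B) = frob M := by
  have hBB : B * Bᵀ = 1 := mul_eq_one_comm.mp hB
  unfold frob
  congr 1
  rw [sum_sq_eq_trace, sum_sq_eq_trace]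
  have h1 : (A * M * B)ᵀ * (A * M * B) = Bᵀ * ((Mᵀ * M) * B) := by
    rw [transpose_mul, transpose_mul]
    simp only [Matrix.mul_assoc]
    rw [← Matrix.mul_assoc Aᵀ A, hA, Matrix.one_mul]
  rw [h1, Matrix.trace_mul_comm, Matrix.mul_assoc, hBB, Matrix.mul_one]

lemma frob_sq {a b : ℕ} (M : Matrix (Fin a) (Fin b) ℝ) :
    frob M ^ 2 = ∑ i, ∑ j, (M i j) ^ 2 := by
  unfold frob
  rw [Real.sq_sqrt (by positivity)]

/-- there is an orthogonal `Q` with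
`‖Ψ − Φ I_{k×d} Q‖_F = ‖Σ − I_{k×d}‖_F`, i.e. the squared error is `∑ (σᵢ − 1)²`. -/
theorem statement1 {n k d : ℕ} (hnk : k ≤ n) (hkd : k ≤ d)
    (U : Matrix (Fin n) (Fin n) ℝ) (hU : Uᵀ * U = 1)
    (R : Matrix (Fin n) (Fin d) ℝ)
    (Φ : Matrix (Fin n) (Fin k) ℝ) (hΦ : Φ = U * rectId n k)
    (Ψ : Matrix (Fin n) (Fin d) ℝ) (hΨ : Ψ = Φ * Φᵀ * R)
    (sv : Fin k → ℝ)
    (Sig : Matrix (Fin k) (Fin d) ℝ)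
    (hSig : Sig = Matrix.of fun (i : Fin k) (j : Fin d) => if (i : ℕ) = (j : ℕ) then sv i else 0)
    (QL : Matrix (Fin k) (Fin k) ℝ) (hQL : QLᵀ * QL = 1)
    (QR : Matrix (Fin d) (Fin d) ℝ) (hQR : QRᵀ * QR = 1)
    (hSVD : Φᵀ * R = QL * Sig * QRᵀ) :
    ∃ Q : Matrix (Fin d) (Fin d) ℝ, Qᵀ * Q = 1 ∧
      frob (Ψ - Φ * rectId k d * Q) = frob (Sig - rectId k d) ∧
      frob (Ψ - Φ * rectId k d * Q) ^ 2 = ∑ i : Fin k, (sv i - 1) ^ 2 := by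
  set E := finSumFinEquiv.trans (finCongr (Nat.add_sub_cancel' hkd)) with hE
  set Qt : Matrix (Fin d) (Fin d) ℝ :=
    (fromBlocks QL 0 0 (1 : Matrix (Fin (d - k)) (Fin (d - k)) ℝ)).submatrix ⇑E.symm ⇑E.symm
    with hQt
  have hΦΦ : Φᵀ * Φ = 1 := by
    rw [hΦ, transpose_mul, rectId_transpose, Matrix.mul_assoc, ← Matrix.mul_assoc Uᵀ, hU,
      Matrix.one_mul, rectId_mul_rectId hnk]
  have hQtQt : Qtᵀ * Qt = 1 := by
    rw [hQt, transpose_submatrix, submatrix_mul_equiv, fromBlocks_transpose,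
      fromBlocks_multiply]
    simp [hQL, fromBlocks_one]
  have hcomm : rectId k d * Qt = QL * rectId k d := by
    rw [rectId_eq hkd, hQt, ← hE, submatrix_mul_equiv, fromCols_mul_fromBlocks]
    have hR : QL * (fromCols (1 : Matrix (Fin k) (Fin k) ℝ)
        (0 : Matrix (Fin k) (Fin (d - k)) ℝ)).submatrix id ⇑E.symm
        = (QL * fromCols (1 : Matrix (Fin k) (Fin k) ℝ)
          (0 : Matrix (Fin k) (Fin (d - k)) ℝ)).submatrix id ⇑E.symm := by
      ext i j; simp only [submatrix_apply, mul_apply, id]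
    rw [hR, mul_fromCols]
    simp
  have hAorth : (Φ * QL)ᵀ * (Φ * QL) = 1 := by
    rw [transpose_mul, Matrix.mul_assoc, ← Matrix.mul_assoc Φᵀ, hΦΦ, Matrix.one_mul, hQL]
  have hBorth : (QRᵀ)ᵀ * QRᵀ = 1 := by
    rw [transpose_transpose]; exact mul_eq_one_comm.mp hQR
  have hΨ' : Ψ = Φ * QL * Sig * QRᵀ := by
    rw [hΨ, Matrix.mul_assoc, hSVD]; simp only [Matrix.mul_assoc]
  have h2 : Φ * rectId k d * (Qt * QRᵀ) = Φ * QL * rectId k d * QRᵀ := by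
    rw [← Matrix.mul_assoc, Matrix.mul_assoc Φ, hcomm]; simp only [Matrix.mul_assoc]
  have hdiff : Ψ - Φ * rectId k d * (Qt * QRᵀ)
      = (Φ * QL) * (Sig - rectId k d) * QRᵀ := by
    rw [hΨ', h2, Matrix.mul_sub, Matrix.sub_mul]
  have hfr : frob (Ψ - Φ * rectId k d * (Qt * QRᵀ)) = frob (Sig - rectId k d) := by
    rw [hdiff]; exact frob_conj _ _ _ hAorth hBorth
  refine ⟨Qt * QRᵀ, ?_, hfr, ?_⟩
  · rw [transpose_mul, transpose_transpose, Matrix.mul_assoc, ← Matrix.mul_assoc Qtᵀ,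
      hQtQt, Matrix.one_mul, mul_eq_one_comm.mp hQR]
  · rw [hfr, frob_sq]
    refine Finset.sum_congr rfl fun i _ => ?_
    rw [Finset.sum_eq_single (Fin.castLE hkd i)]
    · simp [hSig, rectId, Matrix.sub_apply]
    · intro j _ hj
      have : ¬ (i : ℕ) = (j : ℕ) := fun hc => hj (Fin.ext (by simp [← hc]))
      simp [hSig, rectId, Matrix.sub_apply, this]
    · simp
end
end

section
/- Let n ≥ k, d ≥ k, c ≥ 0, δ ≥ 0, ρ ≥ 0, and let d' = d·p be a positive integer with 0 < p ≤ 1. Suppose (i) every singular value σ_i of Φ_tᵀ R satisfies |σ_i − 1| ≤ (√k + c)/√d, (ii) ‖(Ψ_t − Ψ_{t−1}) S_{dp,d}‖_F² ≤ p·(1+δ)·‖H_t − H_{t−1}‖_F², and (iii) ‖H_t − H_{t−1}‖_F ≤ ρ. Then C_{Φ_t} ≤ C_{Θ_t} ≤ C_{Φ_t} + 2·√(k/d)·(√k + c) + 2·√(p(1+δ))·ρ. -/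
open Matrix MeasureTheory ProbabilityTheory Finset

noncomputable section

/-! ### Auxiliary lemmas -/

lemma frob_nonneg {a b : ℕ} (M : Matrix (Fin a) (Fin b) ℝ) : 0 ≤ frob M :=
  Real.sqrt_nonneg _

lemma le_of_sq_le_sq'' {x y : ℝ} (hx : 0 ≤ x) (hy : 0 ≤ y) (h : x ^ 2 ≤ y ^ 2) : x ≤ y := by
  nlinarith

lemma frob_sq_trace {a b : ℕ} (M : Matrix (Fin a) (Fin b) ℝ) :
    frob M ^ 2 = (M * Mᵀ).trace := by
  rw [frob_sq]
  simp [Matrix.trace, Matrix.mul_apply, Matrix.diag, sq]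

lemma frob_neg {a b : ℕ} (M : Matrix (Fin a) (Fin b) ℝ) : frob (-M) = frob M := by
  simp [frob]

lemma frob_eq_norm {a b : ℕ} (M : Matrix (Fin a) (Fin b) ℝ) :
    frob M = ‖(WithLp.equiv 2 ((Fin a × Fin b) → ℝ)).symm (fun p => M p.1 p.2)‖ := by
  rw [EuclideanSpace.norm_eq]
  simp [frob, Fintype.sum_prod_type, Real.norm_eq_abs, sq_abs, WithLp.equiv_symm_apply, PiLp.toLp_apply]

lemma frob_triangle {a b : ℕ} (M N : Matrix (Fin a) (Fin b) ℝ) :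
    frob (M + N) ≤ frob M + frob N := by
  rw [frob_eq_norm, frob_eq_norm, frob_eq_norm]
  have hfun : (fun p : Fin a × Fin b => (M + N) p.1 p.2)
      = (fun p : Fin a × Fin b => M p.1 p.2) + (fun p : Fin a × Fin b => N p.1 p.2) := by
    funext p
    simp [Matrix.add_apply]
  rw [hfun, WithLp.equiv_symm_apply, WithLp.toLp_add]
  exact norm_add_le _ _

lemma frob_sub_le {a b : ℕ} (A B C : Matrix (Fin a) (Fin b) ℝ) :
    frob (A - C) ≤ frob (A - B) + frob (B - C) := by
  have h : A - C = (A - B) + (B - C) := by abel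
  rw [h]
  exact frob_triangle _ _

lemma proj_frob_le {a k m : ℕ} (X : Matrix (Fin a) (Fin k) ℝ) (hX : Xᵀ * X = 1)
    (A : Matrix (Fin a) (Fin m) ℝ) : frob (A - X * Xᵀ * A) ≤ frob A := by
  apply le_of_sq_le_sq'' (frob_nonneg _) (frob_nonneg _)
  rw [frob_sq_trace, frob_sq_trace]
  set P := X * Xᵀ with hPdef
  have hPt : Pᵀ = P := by rw [hPdef, Matrix.transpose_mul, Matrix.transpose_transpose]
  have hPP : P * P = P := by
    rw [hPdef, Matrix.mul_assoc X Xᵀ (X * Xᵀ), ← Matrix.mul_assoc Xᵀ X Xᵀ, hX, Matrix.one_mul]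
  have hexp : (A - P * A) * (A - P * A)ᵀ
      = A * Aᵀ - A * (Aᵀ * P) - P * (A * Aᵀ) + P * (A * (Aᵀ * P)) := by
    rw [Matrix.transpose_sub, Matrix.transpose_mul, hPt]
    simp only [Matrix.sub_mul, Matrix.mul_sub, Matrix.mul_assoc]
    abel
  have ht3 : (P * (A * (Aᵀ * P))).trace = (P * (A * Aᵀ)).trace := by
    have h1 : P * (A * (Aᵀ * P)) = P * (A * Aᵀ) * P := by
      simp only [Matrix.mul_assoc]
    rw [h1, Matrix.trace_mul_cycle, hPP]
  have ht1 : (A * (Aᵀ * P)).trace = (P * (A * Aᵀ)).trace := by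
    have h1 : A * (Aᵀ * P) = (A * Aᵀ) * P := by simp only [Matrix.mul_assoc]
    rw [h1, Matrix.trace_mul_comm]
  have ht2 : 0 ≤ (P * (A * Aᵀ)).trace := by
    have h1 : P * (A * Aᵀ) = X * (Xᵀ * A * Aᵀ) := by
      rw [hPdef]; simp only [Matrix.mul_assoc]
    rw [h1, Matrix.trace_mul_comm]
    have h2 : Xᵀ * A * Aᵀ * X = (Xᵀ * A) * (Xᵀ * A)ᵀ := by
      rw [Matrix.transpose_mul, Matrix.transpose_transpose, Matrix.mul_assoc]
    rw [h2, ← frob_sq_trace]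
    positivity
  rw [hexp, Matrix.trace_add, Matrix.trace_sub, Matrix.trace_sub, ht3, ht1]
  linarith

lemma cost_lipschitz {a k m : ℕ} (X : Matrix (Fin a) (Fin k) ℝ) (hX : Xᵀ * X = 1)
    (M N : Matrix (Fin a) (Fin m) ℝ) :
    kmeansCost M X ≤ kmeansCost N X + frob (M - N) := by
  have h1 : M - X * Xᵀ * M = (N - X * Xᵀ * N) + ((M - N) - X * Xᵀ * (M - N)) := by
    rw [Matrix.mul_sub]; abel
  unfold kmeansCost
  rw [h1]
  calc frob _ ≤ frob (N - X * Xᵀ * N) + frob ((M - N) - X * Xᵀ * (M - N)) :=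
        frob_triangle _ _
    _ ≤ frob (N - X * Xᵀ * N) + frob (M - N) := by
        exact add_le_add_right (proj_frob_le X hX (M - N)) _

lemma indicator_orth {n k : ℕ} {X : Matrix (Fin n) (Fin k) ℝ} (h : IsIndicator X) :
    Xᵀ * X = 1 := by
  obtain ⟨f, hsurj, hX⟩ := h
  ext j j'
  simp only [Matrix.mul_apply, Matrix.transpose_apply, Matrix.one_apply]
  by_cases hjj : j = j'
  · subst hjj
    rw [if_pos rfl]
    have hs0 : 0 < (Finset.univ.filter fun i' => f i' = j).card := by
      obtain ⟨i, hi⟩ := hsurj j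
      exact Finset.card_pos.2 ⟨i, by simp [hi]⟩
    have hterm : ∀ i, X i j * X i j
        = if f i = j then (1 : ℝ) / (Finset.univ.filter fun i' => f i' = j).card else 0 := by
      intro i
      rw [hX i j]
      by_cases hfi : f i = j
      · rw [if_pos hfi, if_pos hfi, div_mul_div_comm, one_mul,
          Real.mul_self_sqrt (Nat.cast_nonneg _)]
      · simp [hfi]
    rw [Finset.sum_congr rfl (fun i _ => hterm i), ← Finset.sum_filter, Finset.sum_const,
      nsmul_eq_mul]
    rw [mul_one_div, div_self (by exact_mod_cast hs0.ne')]
  · rw [if_neg hjj]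
    apply Finset.sum_eq_zero
    intro i _
    rw [hX i j, hX i j']
    by_cases h1 : f i = j
    · have h2 : ¬ f i = j' := fun hc => hjj (by rw [← h1, hc])
      rw [if_neg h2, mul_zero]
    · rw [if_neg h1, zero_mul]

lemma trace_conj_diag {a k : ℕ} (C : Matrix (Fin a) (Fin k) ℝ) (e : Fin k → ℝ) :
    (C * Matrix.diagonal e * Cᵀ).trace = ∑ j, e j * ∑ i, (C i j) ^ 2 := by
  have h : ∀ i : Fin a, (C * Matrix.diagonal e * Cᵀ) i i = ∑ j, e j * (C i j) ^ 2 := by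
    intro i
    rw [Matrix.mul_apply]
    refine Finset.sum_congr rfl fun j _ => ?_
    rw [Matrix.mul_diagonal, Matrix.transpose_apply]
    ring
  rw [Matrix.trace]
  simp only [Matrix.diag_apply]
  rw [Finset.sum_congr rfl fun i _ => h i, Finset.sum_comm]
  exact Finset.sum_congr rfl fun j _ => (Finset.mul_sum _ _ _).symm

lemma frob_mul_close {a k d : ℕ} (B : Matrix (Fin a) (Fin k) ℝ)
    (A : Matrix (Fin k) (Fin d) ℝ) (hH : (A * Aᵀ).IsHermitian) {ε : ℝ} (hε : 0 ≤ ε)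
    (hs : ∀ i, |Real.sqrt (hH.eigenvalues i) - 1| ≤ ε)
    {s : ℝ} (hBs : frob B ≤ s) :
    |frob (B * A) - frob B| ≤ ε * s := by
  have hAt : Aᴴ = Aᵀ := Matrix.conjTranspose_eq_transpose_of_trivial A
  have hPSD : (A * Aᵀ).PosSemidef := hAt ▸ Matrix.posSemidef_self_mul_conjTranspose A
  have heig : ∀ i, 0 ≤ hH.eigenvalues i := fun i => hPSD.eigenvalues_nonneg i
  set V : Matrix (Fin k) (Fin k) ℝ := (hH.eigenvectorUnitary : Matrix (Fin k) (Fin k) ℝ)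
    with hVdef
  have hstar : star V = Vᵀ := by
    rw [Matrix.star_eq_conjTranspose, Matrix.conjTranspose_eq_transpose_of_trivial]
  have hspec : A * Aᵀ = V * Matrix.diagonal hH.eigenvalues * Vᵀ := by
    have h0 := hH.spectral_theorem
    have hcoe : (RCLike.ofReal ∘ hH.eigenvalues : Fin k → ℝ) = hH.eigenvalues := by
      funext i
      simp [RCLike.ofReal_real_eq_id]
    rw [← hstar, ← hcoe]
    exact h0
  have hVVt : V * Vᵀ = 1 := by
    rw [← hstar]
    exact Matrix.mem_unitaryGroup_iff.mp hH.eigenvectorUnitary.2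
  set C := B * V with hCdef
  have h1 : frob (B * A) ^ 2 = ∑ j, hH.eigenvalues j * ∑ i, (C i j) ^ 2 := by
    rw [frob_sq_trace]
    have he : (B * A) * (B * A)ᵀ = C * Matrix.diagonal hH.eigenvalues * Cᵀ := by
      conv_lhs => rw [Matrix.transpose_mul,
        show B * A * (Aᵀ * Bᵀ) = B * (A * Aᵀ) * Bᵀ by simp only [Matrix.mul_assoc], hspec]
      rw [hCdef, Matrix.transpose_mul]
      simp only [Matrix.mul_assoc]
    rw [he, trace_conj_diag]
  have h2 : frob B ^ 2 = ∑ j, ∑ i, (C i j) ^ 2 := by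
    rw [frob_sq_trace]
    have he : B * Bᵀ = C * (Matrix.diagonal (fun _ => (1 : ℝ)) : Matrix (Fin k) (Fin k) ℝ) * Cᵀ := by
      rw [Matrix.diagonal_one, Matrix.mul_one, hCdef, Matrix.transpose_mul,
        ← Matrix.mul_assoc, Matrix.mul_assoc B V Vᵀ, hVVt, Matrix.mul_one]
    rw [he, trace_conj_diag]
    simp
  have hc : ∀ j, 0 ≤ ∑ i, (C i j) ^ 2 := fun j => Finset.sum_nonneg fun i _ => sq_nonneg _
  have hs0 : 0 ≤ s := le_trans (frob_nonneg B) hBs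
  have hup : frob (B * A) ≤ (1 + ε) * frob B := by
    apply le_of_sq_le_sq'' (frob_nonneg _) (mul_nonneg (by linarith) (frob_nonneg B))
    rw [mul_pow, h1]
    calc ∑ j, hH.eigenvalues j * ∑ i, (C i j) ^ 2
        ≤ ∑ j, (1 + ε) ^ 2 * ∑ i, (C i j) ^ 2 := by
          refine Finset.sum_le_sum fun j _ => mul_le_mul_of_nonneg_right ?_ (hc j)
          have h3 := abs_le.mp (hs j)
          nlinarith [Real.sq_sqrt (heig j), Real.sqrt_nonneg (hH.eigenvalues j)]
      _ = (1 + ε) ^ 2 * frob B ^ 2 := by rw [← Finset.mul_sum, ← h2]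
  rw [abs_le]
  constructor
  · by_cases hε1 : ε ≤ 1
    · have hlow : (1 - ε) * frob B ≤ frob (B * A) := by
        apply le_of_sq_le_sq'' (mul_nonneg (by linarith) (frob_nonneg B)) (frob_nonneg _)
        rw [mul_pow, h1, h2, Finset.mul_sum]
        refine Finset.sum_le_sum fun j _ => mul_le_mul_of_nonneg_right ?_ (hc j)
        have h3 := abs_le.mp (hs j)
        nlinarith [Real.sq_sqrt (heig j), Real.sqrt_nonneg (hH.eigenvalues j)]
      nlinarith [frob_nonneg B]
    · push_neg at hε1
      nlinarith [frob_nonneg (B * A), frob_nonneg B]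
  · nlinarith [frob_nonneg B]

lemma rectId_tmul {a b : ℕ} (h : b ≤ a) : (rectId a b)ᵀ * rectId a b = 1 := by
  ext j j'
  simp only [Matrix.mul_apply, Matrix.transpose_apply, rectId, Matrix.of_apply,
    Matrix.one_apply]
  rw [Finset.sum_eq_single (Fin.castLE h j)]
  · simp only [Fin.coe_castLE, if_pos rfl, one_mul]
    by_cases hjj : j = j'
    · simp [hjj]
    · rw [if_neg (fun hc => hjj (Fin.ext hc)), if_neg hjj]
      simp
  · intro i _ hi
    have : (i : ℕ) ≠ (j : ℕ) := fun hc => hi (Fin.ext (by simp [hc]))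
    rw [if_neg this, zero_mul]
  · simp

/-- deterministic dynamic bound
`C_{Φ_t} ≤ C_{Θ_t} ≤ C_{Φ_t} + 2√(k/d)(√k + c) + 2√(p(1+δ)) ρ`. -/
theorem statement12 {n k d d' : ℕ} (hnk : k ≤ n) (hkd : k ≤ d) (hd' : 0 < d')
    (p δ c ρ : ℝ) (hc : 0 ≤ c) (hδ : 0 ≤ δ)
    (hp0 : 0 < p) (hp1 : p ≤ 1) (hpd : (d' : ℝ) = d * p)
    (U1 U2 : Matrix (Fin n) (Fin n) ℝ) (hU1 : U1ᵀ * U1 = 1) (hU2 : U2ᵀ * U2 = 1)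
    (R : Matrix (Fin n) (Fin d) ℝ)
    (Φ1 Φ2 : Matrix (Fin n) (Fin k) ℝ)
    (hΦ1 : Φ1 = U1 * rectId n k) (hΦ2 : Φ2 = U2 * rectId n k)
    (Ψ1 Ψ2 : Matrix (Fin n) (Fin d) ℝ)
    (hΨ1 : Ψ1 = Φ1 * Φ1ᵀ * R) (hΨ2 : Ψ2 = Φ2 * Φ2ᵀ * R)
    (S : Matrix (Fin d) (Fin d) ℝ) (hS : S = rectId d d' * rectId d' d)
    (Θ : Matrix (Fin n) (Fin d) ℝ) (hΘ : Θ = Ψ1 * S + Ψ2 * (1 - S))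
    (hH : (Φ2ᵀ * R * (Φ2ᵀ * R)ᵀ).IsHermitian)
    (hsing : ∀ i : Fin k,
      |Real.sqrt (hH.eigenvalues i) - 1| ≤ (Real.sqrt k + c) / Real.sqrt d)
    (hJL : frob ((Ψ2 - Ψ1) * S) ^ 2 ≤
      p * (1 + δ) * frob (Φ2 * Φ2ᵀ - Φ1 * Φ1ᵀ) ^ 2)
    (hsim : frob (Φ2 * Φ2ᵀ - Φ1 * Φ1ᵀ) ≤ ρ)
    (XΦ XΘ : Matrix (Fin n) (Fin k) ℝ)
    (hXΦ : IsOptAssign Φ2 XΦ) (hXΘ : IsOptAssign Θ XΘ) :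
    kmeansCost Φ2 XΦ ≤ kmeansCost Φ2 XΘ ∧
      kmeansCost Φ2 XΘ ≤ kmeansCost Φ2 XΦ +
        2 * Real.sqrt ((k : ℝ) / d) * (Real.sqrt k + c) +
        2 * Real.sqrt (p * (1 + δ)) * ρ := by
  have hXΦo : XΦᵀ * XΦ = 1 := indicator_orth hXΦ.1
  have hXΘo : XΘᵀ * XΘ = 1 := indicator_orth hXΘ.1
  -- orthonormality of Φ2
  have hΦorth : Φ2ᵀ * Φ2 = 1 := by
    rw [hΦ2, Matrix.transpose_mul]
    have h1 : (rectId n k)ᵀ * U2ᵀ * (U2 * rectId n k)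
        = (rectId n k)ᵀ * ((U2ᵀ * U2) * rectId n k) := by simp only [Matrix.mul_assoc]
    rw [h1, hU2, Matrix.one_mul, rectId_tmul hnk]
  have hfrobΦ2 : frob Φ2 = Real.sqrt k := by
    have hsq : frob Φ2 ^ 2 = (k : ℝ) := by
      rw [frob_sq_trace, Matrix.trace_mul_comm, hΦorth, Matrix.trace_one]
      simp
    rw [← Real.sqrt_sq (frob_nonneg Φ2), hsq]
  -- Step a : spectral closeness
  have hε : (0 : ℝ) ≤ (Real.sqrt k + c) / Real.sqrt d :=
    div_nonneg (add_nonneg (Real.sqrt_nonneg _) hc) (Real.sqrt_nonneg _)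
  have hε1eq : ((Real.sqrt k + c) / Real.sqrt d) * Real.sqrt k
      = Real.sqrt ((k : ℝ) / d) * (Real.sqrt k + c) := by
    rw [Real.sqrt_div (Nat.cast_nonneg k)]
    ring
  have keyA : ∀ X : Matrix (Fin n) (Fin k) ℝ, Xᵀ * X = 1 →
      |kmeansCost Ψ2 X - kmeansCost Φ2 X|
        ≤ Real.sqrt ((k : ℝ) / d) * (Real.sqrt k + c) := by
    intro X hXo
    have hB : frob (Φ2 - X * Xᵀ * Φ2) ≤ Real.sqrt k :=
      hfrobΦ2 ▸ proj_frob_le X hXo Φ2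
    have hcost : kmeansCost Ψ2 X = frob ((Φ2 - X * Xᵀ * Φ2) * (Φ2ᵀ * R)) := by
      unfold kmeansCost
      congr 1
      rw [hΨ2, Matrix.sub_mul]
      simp only [Matrix.mul_assoc]
    have h := frob_mul_close (Φ2 - X * Xᵀ * Φ2) (Φ2ᵀ * R) hH hε hsing hB
    rw [← hε1eq]
    calc |kmeansCost Ψ2 X - kmeansCost Φ2 X|
        = |frob ((Φ2 - X * Xᵀ * Φ2) * (Φ2ᵀ * R)) - frob (Φ2 - X * Xᵀ * Φ2)| := by
          rw [hcost]; rfl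
      _ ≤ _ := h
  -- Step b : perturbation Θ vs Ψ2
  have hρ0 : 0 ≤ ρ := le_trans (frob_nonneg _) hsim
  have hq0 : 0 ≤ p * (1 + δ) := by positivity
  have hΘΨ : Θ - Ψ2 = (Ψ1 - Ψ2) * S := by
    rw [hΘ, Matrix.mul_sub, Matrix.mul_one, Matrix.sub_mul]
    abel
  have hfrobΘΨ : frob (Θ - Ψ2) ≤ Real.sqrt (p * (1 + δ)) * ρ := by
    rw [hΘΨ]
    have hneg : (Ψ1 - Ψ2) * S = -((Ψ2 - Ψ1) * S) := by
      rw [← Matrix.neg_mul, neg_sub]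
    rw [hneg, frob_neg]
    apply le_of_sq_le_sq'' (frob_nonneg _) (by positivity)
    rw [mul_pow, Real.sq_sqrt hq0]
    have hH2 : frob (Φ2 * Φ2ᵀ - Φ1 * Φ1ᵀ) ^ 2 ≤ ρ ^ 2 := by
      nlinarith [frob_nonneg (Φ2 * Φ2ᵀ - Φ1 * Φ1ᵀ)]
    nlinarith
  have hfrobΨΘ : frob (Ψ2 - Θ) ≤ Real.sqrt (p * (1 + δ)) * ρ := by
    rw [← frob_neg, neg_sub]
    exact hfrobΘΨ
  -- chain
  have hA1 := abs_le.mp (keyA XΘ hXΘo)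
  have hA2 := abs_le.mp (keyA XΦ hXΦo)
  have i2 : kmeansCost Ψ2 XΘ ≤ kmeansCost Θ XΘ + Real.sqrt (p * (1 + δ)) * ρ :=
    le_trans (cost_lipschitz XΘ hXΘo Ψ2 Θ) (by linarith [hfrobΨΘ])
  have i3 : kmeansCost Θ XΘ ≤ kmeansCost Θ XΦ := hXΘ.2 XΦ hXΦ.1
  have i4 : kmeansCost Θ XΦ ≤ kmeansCost Ψ2 XΦ + Real.sqrt (p * (1 + δ)) * ρ :=
    le_trans (cost_lipschitz XΦ hXΦo Θ Ψ2) (by linarith [hfrobΘΨ])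
  refine ⟨hXΦ.2 XΘ hXΘ.1, ?_⟩
  linarith [hA1.1, hA1.2, hA2.1, hA2.2]
end
end
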